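/- Let G be a group, c ∈ G, m ≥ 1 and q ≥ 1 integers. Let φ be the map on tuples (w₀; w₁, …, w_m) ∈ G^{m+1} with w₀w₁⋯w_m = c given by φ(w₀; w₁, …, w_m) = ((c w_m c⁻¹) w₀ (c w_m c⁻¹)⁻¹; c w_m c⁻¹, w₁, …, w_{m-1}). Then a tuple (w₀; w₁, …, w_m) is fixed by φ^{qm} if and only if every component w_i (0 ≤ i ≤ m) commutes with c^q. -/

import Mathlib

def phi {G : Type*} [Group G] (c : G) (m : ℕ) (w : Fin (m + 1) → G) :
    Fin (m + 1) → G := fun i =>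
  if i = 0 then (c * w (Fin.last m) * c⁻¹) * w 0 * (c * w (Fin.last m) * c⁻¹)⁻¹
  else if i = 1 then c * w (Fin.last m) * c⁻¹
  else w (i - 1)

section aux
variable {G : Type*} [Group G]

lemma phi_zero (c : G) (m : ℕ) (v : Fin (m + 1) → G) :
    phi c m v 0 = (c * v (Fin.last m) * c⁻¹) * v 0 * (c * v (Fin.last m) * c⁻¹)⁻¹ := by
  simp [phi]

lemma phi_one (c : G) (m : ℕ) (hm : 1 ≤ m) (v : Fin (m + 1) → G) :
    phi c m v 1 = c * v (Fin.last m) * c⁻¹ := by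
  have h01 : (1 : Fin (m+1)) ≠ 0 := by
    intro h
    have := congrArg Fin.val h
    rw [Fin.val_one'] at this
    simp at this
    omega
  simp [phi, h01]

lemma phi_other (c : G) (m : ℕ) (v : Fin (m + 1) → G) (i : Fin (m + 1))
    (h0 : i ≠ 0) (h1 : i ≠ 1) : phi c m v i = v (i - 1) := by
  simp only [phi]; rw [if_neg h0, if_neg h1]

/-- state of the iterate after k steps, 0 ≤ k ≤ m -/
def Fk (c : G) (m k : ℕ) (w : Fin (m + 1) → G) : Fin (m + 1) → G := fun i =>
  if (i : ℕ) = 0 then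
    (c * (((List.ofFn w).drop (m + 1 - k)).prod) * c⁻¹) * w 0 *
      (c * (((List.ofFn w).drop (m + 1 - k)).prod) * c⁻¹)⁻¹
  else if h : (i : ℕ) ≤ k then c * w ⟨m - k + i, by have := i.isLt; omega⟩ * c⁻¹
  else w ⟨(i : ℕ) - k, by have := i.isLt; omega⟩

lemma Fk_zero (c : G) (m k : ℕ) (w : Fin (m + 1) → G) :
    Fk c m k w 0 = (c * (((List.ofFn w).drop (m + 1 - k)).prod) * c⁻¹) * w 0 *
      (c * (((List.ofFn w).drop (m + 1 - k)).prod) * c⁻¹)⁻¹ := by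
  simp [Fk]

lemma Fk_le (c : G) (m k : ℕ) (w : Fin (m + 1) → G) (i : Fin (m + 1))
    (h0 : (i : ℕ) ≠ 0) (h : (i : ℕ) ≤ k) (j : Fin (m + 1))
    (hj : (j : ℕ) = m - k + i) :
    Fk c m k w i = c * w j * c⁻¹ := by
  have hij : (⟨m - k + ↑i, by have := i.isLt; omega⟩ : Fin (m + 1)) = j :=
    Fin.ext (by simp [hj])
  simp only [Fk]
  rw [if_neg h0, dif_pos h, hij]

lemma Fk_gt (c : G) (m k : ℕ) (w : Fin (m + 1) → G) (i : Fin (m + 1))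
    (h0 : (i : ℕ) ≠ 0) (h : ¬ (i : ℕ) ≤ k) (j : Fin (m + 1))
    (hj : (j : ℕ) = (i : ℕ) - k) :
    Fk c m k w i = w j := by
  have hij : (⟨(i : ℕ) - k, by have := i.isLt; omega⟩ : Fin (m + 1)) = j :=
    Fin.ext (by simp [hj])
  simp only [Fk]
  rw [if_neg h0, dif_neg h, hij]

lemma phi_iter_eq (c : G) (m : ℕ) (w : Fin (m + 1) → G) :
    ∀ k, k ≤ m → (phi c m)^[k] w = Fk c m k w := by
  intro k
  induction k with
  | zero =>
    intro _
    funext i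
    simp only [Function.iterate_zero, id_eq]
    by_cases h0 : i = 0
    · subst h0
      rw [Fk_zero]
      have hnil : (List.ofFn w).drop (m + 1 - 0) = [] := by
        apply List.drop_eq_nil_of_le
        simp
      rw [hnil, List.prod_nil]
      group
    · have h0' : (i : ℕ) ≠ 0 := fun h => h0 (Fin.ext (by simp [h]))
      rw [Fk_gt c m 0 w i h0' (by omega) i (by omega)]
  | succ k ih =>
    intro hk
    have hkm : k < m := hk
    rw [Function.iterate_succ_apply', ih (le_of_lt hkm)]
    funext i
    have him : (i : ℕ) < m + 1 := i.isLt
    have hlast : Fk c m k w (Fin.last m) = w ⟨m - k, by omega⟩ := by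
      rw [Fk_gt c m k w (Fin.last m) (by rw [Fin.val_last]; omega)
        (by rw [Fin.val_last]; omega) ⟨m - k, by omega⟩ (by simp [Fin.val_last])]
    have hdrop : ((List.ofFn w).drop (m + 1 - (k+1))).prod
        = w ⟨m - k, by omega⟩ * ((List.ofFn w).drop (m + 1 - k)).prod := by
      have h2 : m - k < (List.ofFn w).length := by simp; try omega
      rw [show m + 1 - (k+1) = m - k from by omega,
        List.drop_eq_getElem_cons h2, List.prod_cons, List.getElem_ofFn,
        show m + 1 - k = (m - k) + 1 from by omega]
    by_cases h0 : i = 0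
    · subst h0
      rw [phi_zero, hlast, Fk_zero, Fk_zero, hdrop]
      group
    · have h0' : (i : ℕ) ≠ 0 := fun h => h0 (Fin.ext h)
      have hv1 : ((1 : Fin (m+1)) : ℕ) = 1 := by
        rw [Fin.val_one']; exact Nat.mod_eq_of_lt (by omega)
      by_cases h1 : i = 1
      · subst h1
        rw [phi_one c m (by omega), hlast,
          Fk_le c m (k+1) w 1 (by rw [hv1]; omega) (by rw [hv1]; omega)
            ⟨m - k, by omega⟩
            (by show m - k = m - (k+1) + ((1 : Fin (m+1)) : ℕ); rw [hv1]; omega)]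
      · have h1' : (i : ℕ) ≠ 1 := by
          intro h; apply h1; exact Fin.ext (by omega)
        have hi2 : 2 ≤ (i : ℕ) := by omega
        have hsub : ((i - 1 : Fin (m+1)) : ℕ) = (i : ℕ) - 1 := by
          rw [Fin.sub_def]
          show (m + 1 - ↑(1 : Fin (m+1)) + ↑i) % (m+1) = ↑i - 1
          rw [hv1, show m + 1 - 1 = m from rfl, Nat.mod_eq_sub_mod (by omega),
            show m + (i:ℕ) - (m+1) = (i:ℕ) - 1 from by omega]
          exact Nat.mod_eq_of_lt (by omega)
        rw [phi_other c m _ i h0 h1]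
        by_cases hik : (i : ℕ) ≤ k + 1
        · rw [Fk_le c m k w (i-1) (by rw [hsub]; omega) (by rw [hsub]; omega)
              ⟨m - (k+1) + i, by omega⟩ (by simp [hsub]; omega),
            Fk_le c m (k+1) w i h0' hik ⟨m - (k+1) + i, by omega⟩ (by simp)]
        · rw [Fk_gt c m k w (i-1) (by rw [hsub]; omega) (by rw [hsub]; omega)
              ⟨(i : ℕ) - (k+1), by omega⟩ (by simp [hsub]; omega),
            Fk_gt c m (k+1) w i h0' hik ⟨(i : ℕ) - (k+1), by omega⟩ (by simp)]

lemma conj_list_prod (c : G) (l : List G) :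
    (l.map fun x => c * x * c⁻¹).prod = c * l.prod * c⁻¹ := by
  induction l with
  | nil => simp
  | cons a t ih =>
    rw [List.map_cons, List.prod_cons, List.prod_cons, ih]
    group

lemma phi_pow_m (c : G) (m : ℕ) (hm : 1 ≤ m) (w : Fin (m + 1) → G)
    (hw : (List.ofFn w).prod = c) :
    (phi c m)^[m] w = fun i => c * w i * c⁻¹ := by
  rw [phi_iter_eq c m w m le_rfl]
  funext i
  by_cases h0 : i = 0
  · subst h0
    rw [Fk_zero]
    have hd : ((List.ofFn w).drop 1).prod = (w 0)⁻¹ * c := by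
      have h2 : 0 < (List.ofFn w).length := by simp
      have hh : (List.ofFn w).prod = w 0 * ((List.ofFn w).drop 1).prod := by
        conv_lhs => rw [← @List.drop_zero _ (List.ofFn w),
          List.drop_eq_getElem_cons h2, List.prod_cons]
        congr 1
        rw [List.getElem_ofFn]
        exact congrArg w (Fin.ext (by simp))
      rw [hh] at hw
      rw [← hw]
      group
    rw [show m + 1 - m = 1 from by omega, hd]
    group
  · have h0' : (i : ℕ) ≠ 0 := fun h => h0 (Fin.ext h)
    rw [Fk_le c m m w i h0' (by have := i.isLt; omega) i (by omega)]

end aux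

theorem stmt_9 {G : Type*} [Group G] (c : G) (m q : ℕ) (hm : 1 ≤ m) (hq : 1 ≤ q)
    (w : Fin (m + 1) → G) (hw : (List.ofFn w).prod = c) :
    (phi c m)^[q * m] w = w ↔ ∀ i : Fin (m + 1), Commute (w i) (c ^ q) := by
  have key : ∀ n : ℕ, (phi c m)^[n * m] w = fun i => c ^ n * w i * (c ^ n)⁻¹ := by
    intro n
    induction n with
    | zero => simp
    | succ n ih =>
      have hprod : (List.ofFn fun i => c ^ n * w i * (c ^ n)⁻¹).prod = c := by
        rw [show (fun i : Fin (m+1) => c ^ n * w i * (c ^ n)⁻¹)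
            = (fun x => c ^ n * x * (c ^ n)⁻¹) ∘ w from rfl,
          ← List.map_ofFn, conj_list_prod, hw]
        group
      have hstep : (phi c m)^[m] (fun i => c ^ n * w i * (c ^ n)⁻¹)
          = fun i => c ^ (n+1) * w i * (c ^ (n+1))⁻¹ := by
        rw [phi_pow_m c m hm _ hprod]
        funext i
        simp only [pow_succ]
        group
      rw [show (n + 1) * m = m + n * m from by ring, Function.iterate_add_apply, ih, hstep]
  rw [key q]
  constructor
  · intro h i
    have hh := congrFun h i
    have : c ^ q * w i = w i * c ^ q := by
      conv_rhs => rw [← hh]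
      group
    exact this.symm
  · intro h
    funext i
    have hh := (h i).eq
    rw [← hh]
    group
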